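/- Let k ≥ 2, let q : Fin k → ℝ be a class-posterior vector (q ≥ 0, Σ_y q(y) = 1), let w : {1,…,k−1} → ℝ be nonnegative with Σ_{j=1}^{k−1} w_j = 1, and let ℓ : Fin k → ℝ be an arbitrary loss vector. For each j and each subset Ȳ ⊆ Fin k with |Ȳ| = j define p̄_j(Ȳ) = (1/C(k−1,j)) Σ_{y' ∉ Ȳ} q(y') and the MCL loss L̄_j(ℓ, Ȳ) = Σ_{y ∉ Ȳ} ℓ(y) − ((k−1−j)/j) Σ_{y' ∈ Ȳ} ℓ(y'). Then the ordinary risk equals the complementary risk: Σ_{y=1}^k q(y) ℓ(y) = Σ_{j=1}^{k−1} w_j · Σ_{Ȳ : |Ȳ|=j} p̄_j(Ȳ) · L̄_j(ℓ, Ȳ). (Theorem 3: the unbiased risk estimator, stated conditionally on the instance x with ℓ(y) = L(f(x), y).) -/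

import Mathlib

open Finset

lemma countsub (k j : ℕ) (s : Finset (Fin k)) (p : Finset (Fin k) → Prop) [DecidablePred p]
    (hp : ∀ Y, p Y ↔ Y ⊆ s) :
    ((Finset.univ.powersetCard j).filter p).card = s.card.choose j := by
  rw [show (Finset.univ.powersetCard j).filter p = s.powersetCard j by
    ext Y; simp [Finset.mem_powersetCard, hp, and_comm]]
  exact Finset.card_powersetCard j s

lemma notmem_iff (k : ℕ) (y : Fin k) (Y : Finset (Fin k)) : y ∉ Y ↔ Y ⊆ ({y} : Finset (Fin k))ᶜ := by
  constructor
  · intro h z hz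
    simp only [Finset.mem_compl, Finset.mem_singleton]
    rintro rfl; exact h hz
  · intro h hy
    simpa using h hy

lemma notmem2_iff (k : ℕ) (y z : Fin k) (Y : Finset (Fin k)) :
    (y ∉ Y ∧ z ∉ Y) ↔ Y ⊆ ({y, z} : Finset (Fin k))ᶜ := by
  constructor
  · intro h a ha
    simp only [Finset.mem_compl, Finset.mem_insert, Finset.mem_singleton]
    rintro (rfl | rfl)
    · exact h.1 ha
    · exact h.2 ha
  · intro h
    constructor
    · intro hy; simpa using h hy
    · intro hz; have := h hz; simp at this

lemma single (k j : ℕ) (f : Fin k → ℝ) :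
    ∑ Y ∈ (Finset.univ : Finset (Fin k)).powersetCard j, ∑ y ∈ Yᶜ, f y
    = ((k-1).choose j : ℝ) * ∑ y, f y := by
  have h1 : ∀ Y : Finset (Fin k), ∑ y ∈ Yᶜ, f y = ∑ y, if y ∉ Y then f y else 0 := by
    intro Y
    rw [← Finset.sum_filter]
    congr 1
    ext y; simp
  simp_rw [h1]
  rw [Finset.sum_comm, Finset.mul_sum]
  refine Finset.sum_congr rfl fun y _ => ?_
  rw [Finset.sum_ite, Finset.sum_const, Finset.sum_const_zero, add_zero]
  rw [countsub k j ({y}ᶜ) _ (fun Y => notmem_iff k y Y)]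
  have hc : ({y} : Finset (Fin k))ᶜ.card = k - 1 := by
    rw [Finset.card_compl]; simp
  rw [hc, nsmul_eq_mul]

lemma double (k j : ℕ) (q ℓ : Fin k → ℝ) :
    ∑ Y ∈ (Finset.univ : Finset (Fin k)).powersetCard j,
      (∑ y ∈ Yᶜ, q y) * (∑ z ∈ Yᶜ, ℓ z)
    = ((k-2).choose j : ℝ) * ((∑ y, q y) * (∑ z, ℓ z))
      + (((k-1).choose j : ℝ) - ((k-2).choose j : ℝ)) * ∑ y, q y * ℓ y := by
  have h1 : ∀ Y : Finset (Fin k), (∑ y ∈ Yᶜ, q y) * (∑ z ∈ Yᶜ, ℓ z)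
      = ∑ y, ∑ z, if y ∉ Y ∧ z ∉ Y then q y * ℓ z else 0 := by
    intro Y
    rw [Finset.sum_mul_sum]
    rw [show (∑ y, ∑ z, if y ∉ Y ∧ z ∉ Y then q y * ℓ z else 0)
        = ∑ y, if y ∉ Y then (∑ z, if z ∉ Y then q y * ℓ z else 0) else 0 by
      refine Finset.sum_congr rfl fun y _ => ?_
      by_cases hy : y ∉ Y <;> simp [hy]]
    rw [← Finset.sum_filter, show Finset.univ.filter (fun y => y ∉ Y) = Yᶜ by ext a; simp]
    refine Finset.sum_congr rfl fun y hy => ?_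
    rw [← Finset.sum_filter, show Finset.univ.filter (fun z => z ∉ Y) = Yᶜ by ext a; simp]
  simp_rw [h1]
  rw [Finset.sum_comm]
  have h2 : ∀ y : Fin k, ∑ Y ∈ (Finset.univ : Finset (Fin k)).powersetCard j,
      ∑ z, (if y ∉ Y ∧ z ∉ Y then q y * ℓ z else 0)
      = ∑ z, ((k - (if y = z then 1 else 2)).choose j : ℝ) * (q y * ℓ z) := by
    intro y
    rw [Finset.sum_comm]
    refine Finset.sum_congr rfl fun z _ => ?_
    rw [Finset.sum_ite, Finset.sum_const, Finset.sum_const_zero, add_zero]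
    rw [countsub k j ({y, z}ᶜ) _ (fun Y => notmem2_iff k y z Y)]
    have hc : ({y, z} : Finset (Fin k))ᶜ.card = k - (if y = z then 1 else 2) := by
      rw [Finset.card_compl]
      by_cases h : y = z <;> simp [h, Finset.card_insert_of_notMem]
    rw [hc, nsmul_eq_mul]
  simp_rw [h2]
  have h3 : ∀ y z : Fin k, ((k - (if y = z then 1 else 2)).choose j : ℝ) * (q y * ℓ z)
      = ((k-2).choose j : ℝ) * (q y * ℓ z)
        + (if y = z then (((k-1).choose j : ℝ) - ((k-2).choose j : ℝ)) * (q y * ℓ z) else 0) := by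
    intro y z
    by_cases h : y = z <;> simp [h] <;> ring
  simp_rw [h3, Finset.sum_add_distrib]
  congr 1
  · have e : (∑ y : Fin k, ∑ z : Fin k, ((k-2).choose j : ℝ) * (q y * ℓ z))
        = ((k-2).choose j : ℝ) * ((∑ y, q y) * (∑ z, ℓ z)) := by
      rw [Finset.sum_mul_sum, Finset.mul_sum]
      refine Finset.sum_congr rfl fun y _ => ?_
      rw [Finset.mul_sum]
    rw [e, Finset.mul_sum]
  · rw [Finset.mul_sum]
    refine Finset.sum_congr rfl fun y _ => ?_
    rw [Finset.sum_ite_eq Finset.univ y (fun z => (((k-1).choose j : ℝ) - ((k-2).choose j : ℝ)) * (q y * ℓ z))]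
    simp

/-- **Theorem 3** (unbiased risk estimator, conditionally on the instance `x`): for any
loss vector `ℓ`, the ordinary risk equals the complementary risk:
`∑_y q(y) ℓ(y) = ∑_{j=1}^{k−1} w j ∑_{Ȳ : |Ȳ| = j} p̄_j(Ȳ) · L̄_j(ℓ, Ȳ)`, where
`p̄_j(Ȳ) = (1/C(k−1,j)) ∑_{y' ∉ Ȳ} q(y')` and
`L̄_j(ℓ, Ȳ) = ∑_{y ∉ Ȳ} ℓ(y) − ((k−1−j)/j) ∑_{y' ∈ Ȳ} ℓ(y')`. -/
theorem stmt7 (k : ℕ) (hk : 2 ≤ k) (q : Fin k → ℝ)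
    (hq : ∀ y, 0 ≤ q y) (hqsum : ∑ y, q y = 1)
    (w : ℕ → ℝ) (hw : ∀ j ∈ Finset.Icc 1 (k - 1), 0 ≤ w j)
    (hwsum : ∑ j ∈ Finset.Icc 1 (k - 1), w j = 1)
    (ℓ : Fin k → ℝ)
    (pbar : ℕ → Finset (Fin k) → ℝ)
    (hpbar : ∀ j Y, pbar j Y = (((k - 1).choose j : ℝ))⁻¹ * ∑ y' ∈ Yᶜ, q y')
    (Lbar : ℕ → Finset (Fin k) → ℝ)
    (hLbar : ∀ j Y, Lbar j Y =
      (∑ y ∈ Yᶜ, ℓ y) - ((k - 1 - j : ℕ) : ℝ) / (j : ℝ) * ∑ y' ∈ Y, ℓ y') :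
    ∑ y, q y * ℓ y = ∑ j ∈ Finset.Icc 1 (k - 1), w j *
        ∑ Y ∈ (Finset.univ : Finset (Fin k)).powersetCard j, pbar j Y * Lbar j Y := by
  have key : ∀ j ∈ Finset.Icc 1 (k - 1),
      ∑ Y ∈ (Finset.univ : Finset (Fin k)).powersetCard j, pbar j Y * Lbar j Y
        = ∑ y, q y * ℓ y := by
    intro j hj
    rw [Finset.mem_Icc] at hj
    obtain ⟨hj1, hj2⟩ := hj
    have hsplit : ∀ Y : Finset (Fin k), ∑ y' ∈ Y, ℓ y' = (∑ y, ℓ y) - ∑ y ∈ Yᶜ, ℓ y := by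
      intro Y
      rw [← Finset.sum_add_sum_compl Y ℓ]
      ring
    have expand : ∀ Y : Finset (Fin k), pbar j Y * Lbar j Y
        = (((k - 1).choose j : ℝ))⁻¹ * (1 + ((k - 1 - j : ℕ) : ℝ) / (j : ℝ))
            * ((∑ y' ∈ Yᶜ, q y') * (∑ y ∈ Yᶜ, ℓ y))
          - (((k - 1).choose j : ℝ))⁻¹ * (((k - 1 - j : ℕ) : ℝ) / (j : ℝ)) * (∑ y, ℓ y)
            * (∑ y' ∈ Yᶜ, q y') := by
      intro Y
      rw [hpbar, hLbar, hsplit Y]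
      ring
    simp_rw [expand]
    rw [Finset.sum_sub_distrib, ← Finset.mul_sum, ← Finset.mul_sum]
    rw [double k j q ℓ, single k j q, hqsum, mul_one]
    have hcne : (((k - 1).choose j : ℝ)) ≠ 0 := by
      exact_mod_cast (Nat.choose_pos hj2).ne'
    have hjne : (j : ℝ) ≠ 0 := by
      exact_mod_cast Nat.one_le_iff_ne_zero.mp hj1
    have hKJ : ((k - 1 - j : ℕ) : ℝ) = ((k - 1 : ℕ) : ℝ) - (j : ℝ) :=
      Nat.cast_sub hj2
    have h2 : ((k - 2).choose j : ℝ) * ((k - 1 : ℕ) : ℝ)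
        = ((k - 1).choose j : ℝ) * (((k - 1 : ℕ) : ℝ) - (j : ℝ)) := by
      rw [← hKJ]
      have h2n : (k - 2).choose j * (k - 1) = (k - 1).choose j * (k - 1 - j) := by
        have h := Nat.choose_mul_succ_eq (k - 2) j
        have hk1 : k - 2 + 1 = k - 1 := by omega
        rwa [hk1] at h
      exact_mod_cast h2n
    rw [hKJ]
    rw [Nat.cast_sub (by omega : 1 ≤ k)] at h2
    push_cast at h2
    field_simp
    rw [Nat.cast_sub (by omega : 1 ≤ k), Nat.cast_one]
    linear_combination ((∑ y, ℓ y) - (∑ y, q y * ℓ y)) * h2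
  symm
  calc ∑ j ∈ Finset.Icc 1 (k - 1), w j *
          ∑ Y ∈ (Finset.univ : Finset (Fin k)).powersetCard j, pbar j Y * Lbar j Y
      = ∑ j ∈ Finset.Icc 1 (k - 1), w j * ∑ y, q y * ℓ y :=
        Finset.sum_congr rfl (fun j hj => by rw [key j hj])
    _ = ∑ y, q y * ℓ y := by rw [← Finset.sum_mul, hwsum, one_mul]
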